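/- arXiv:1008.1622 — 2 statements merged into one kernel-verified Lean document; each statement's English description precedes it below -/
import Mathlib

section
/- Let n ≥ 2, let z_1, …, z_n be arbitrary vectors in ℝ^m, set s_j := z_{j+1} − z_j with indices taken mod n (z_{n+1} := z_1), and let μ be a permutation of {1, …, n}. Then for every k ∈ {1, …, n−1} there exist nonpositive integers λ_1, …, λ_{n−1} such that Σ_{j=1}^{k} s_{μ(j)} = Σ_{j=1}^{n−1} λ_j (z_{μ(j)} − z_{μ(j+1)}). -/
open Filter Topology

noncomputable section

/-- The monomial `x^z = ∏ l, x l ^ z l`. -/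
def mono {m : ℕ} (zv : Fin m → ℕ) (x : Fin m → ℝ) : ℝ := ∏ l, x l ^ zv l

/-- The ratio monomial `(x/x*)^z = ∏ l, (x l / x* l) ^ z l`. -/
def ratio {m : ℕ} (xstar x : Fin m → ℝ) (zv : Fin m → ℕ) : ℝ :=
  ∏ l, (x l / xstar l) ^ zv l

/-- The mass-action vector field `f(x) = Σ_{i,j} k(i,j) (z_j - z_i) x^{z_i}`
(terms with `k i j = 0` vanish, so this is the sum over reactions). -/
def maf {m n : ℕ} (z : Fin n → Fin m → ℕ) (k : Fin n → Fin n → ℝ) (x : Fin m → ℝ) :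
    Fin m → ℝ :=
  fun l => ∑ i, ∑ j, k i j * ((z j l : ℝ) - (z i l : ℝ)) * mono (z i) x

/-- `x*` is a complex balanced equilibrium. -/
def complexBalanced {m n : ℕ} (z : Fin n → Fin m → ℕ) (k : Fin n → Fin n → ℝ)
    (xstar : Fin m → ℝ) : Prop :=
  ∀ i, ∑ j, k j i * mono (z j) xstar = mono (z i) xstar * ∑ j, k i j

/-- Cyclic successor on `Fin n`. -/
def cyc {n : ℕ} (i : Fin n) : Fin n := ⟨(i.val + 1) % n, Nat.mod_lt _ i.pos⟩

/-- The system is cyclic: its reactions are exactly `C_i → C_{i+1}` (cyclically). -/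
def isCyclic {n : ℕ} (k : Fin n → Fin n → ℝ) : Prop :=
  (∀ i, 0 < k i (cyc i)) ∧ ∀ i j, j ≠ cyc i → k i j = 0

/-- Inclusion `Fin (n-1) → Fin n`. -/
def emb {n : ℕ} (i : Fin (n - 1)) : Fin n := ⟨i.val, by have := i.isLt; omega⟩

/-- Successor inclusion `Fin (n-1) → Fin n`, `i ↦ i+1`. -/
def embS {n : ℕ} (i : Fin (n - 1)) : Fin n := ⟨i.val + 1, by have := i.isLt; omega⟩

/-- The stratum associated with a permutation `μ` of the complexes. -/
def stratum {m n : ℕ} (z : Fin n → Fin m → ℕ) (xstar : Fin m → ℝ)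
    (μ : Equiv.Perm (Fin n)) : Set (Fin m → ℝ) :=
  {x | (∀ l, 0 < x l) ∧
    ∀ i : Fin (n - 1), ratio xstar x (z (μ (emb i))) > ratio xstar x (z (μ (embS i)))}

/-- `L_I`: the relative interior of the face of the nonnegative orthant given by `I`. -/
def LI {m : ℕ} (I : Finset (Fin m)) : Set (Fin m → ℝ) :=
  {x | (∀ i ∈ I, x i = 0) ∧ ∀ i ∉ I, 0 < x i}

/-- Semi-locking set. -/
def semiLocking {m n : ℕ} (z : Fin n → Fin m → ℕ) (k : Fin n → Fin n → ℝ)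
    (I : Finset (Fin m)) : Prop :=
  I.Nonempty ∧ ∀ i j : Fin n, 0 < k i j → (∃ l ∈ I, 0 < z j l) → ∃ l ∈ I, 0 < z i l

/-- The stoichiometric subspace. -/
def stoich {m n : ℕ} (z : Fin n → Fin m → ℕ) (k : Fin n → Fin n → ℝ) :
    Submodule ℝ (Fin m → ℝ) :=
  Submodule.span ℝ {v | ∃ i j : Fin n, 0 < k i j ∧ v = fun l => (z j l : ℝ) - (z i l : ℝ)}

lemma cyc_inj {n : ℕ} : Function.Injective (cyc (n := n)) := by
  intro a b h
  have h' := congrArg Fin.val h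
  simp only [cyc] at h'
  have e : ∀ c : Fin n, (c.val + 1) % n = if c.val + 1 = n then 0 else c.val + 1 := by
    intro c
    split
    · simp [*]
    · exact Nat.mod_eq_of_lt (by have := c.isLt; omega)
  rw [e a, e b] at h'
  have ha := a.isLt; have hb := b.isLt
  ext
  split_ifs at h' <;> omega

lemma tel_aux {n : ℕ} (g : Fin n → ℝ) (hn : 2 ≤ n) (q : Fin n) :
    ∑ t : Fin (n-1), (if t.val < q.val then (1:ℝ) else 0) * (g (embS t) - g (emb t))
      = g q - g ⟨0, by omega⟩ := by
  have key : ∀ (p : ℕ) (hp : p < n),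
      ∑ t ∈ Finset.range p, (if h : t < n - 1 then
          (g ⟨t+1, by omega⟩ - g ⟨t, by omega⟩) else 0)
        = g ⟨p, hp⟩ - g ⟨0, by omega⟩ := by
    intro p
    induction p with
    | zero => intro hp; simp
    | succ p ih =>
      intro hp
      rw [Finset.sum_range_succ, ih (by omega), dif_pos (by omega : p < n - 1)]
      ring
  have h1 : ∑ t : Fin (n-1), (if t.val < q.val then (1:ℝ) else 0) * (g (embS t) - g (emb t))
      = ∑ t ∈ Finset.range (n-1), (if t < q.val then (1:ℝ) else 0) *
          (if h : t < n - 1 then (g ⟨t+1, by omega⟩ - g ⟨t, by omega⟩) else 0) := by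
    rw [← Fin.sum_univ_eq_sum_range]
    refine Finset.sum_congr rfl fun t _ => ?_
    rw [dif_pos t.isLt]
    rfl
  rw [h1, ← key q.val q.isLt]
  simp only [ite_mul, one_mul, zero_mul]
  rw [← Finset.sum_filter]
  congr 1
  ext x
  simp only [Finset.mem_filter, Finset.mem_range]
  have := q.isLt
  omega

/-- for arbitrary vectors `z_1, …, z_n ∈ ℝ^m`, `s_j := z_{j+1} - z_j`
(indices mod `n`) and any permutation `μ`, every partial sum `Σ_{j=1}^k s_{μ(j)}`
(`1 ≤ k ≤ n-1`) is a nonpositive-integer combination of the vectors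
`z_{μ(j)} - z_{μ(j+1)}`, `j = 1, …, n-1`. -/
theorem stmt4 {m n : ℕ} (hn : 2 ≤ n) (z : Fin n → Fin m → ℝ) (μ : Equiv.Perm (Fin n)) :
    ∀ kk : ℕ, 1 ≤ kk → kk ≤ n - 1 →
      ∃ lam : Fin (n - 1) → ℤ, (∀ j, lam j ≤ 0) ∧
        ∀ l : Fin m,
          ∑ j ∈ Finset.univ.filter (fun j : Fin n => j.val < kk),
              (z (cyc (μ j)) l - z (μ j) l)
            = ∑ j : Fin (n - 1), (lam j : ℝ) * (z (μ (emb j)) l - z (μ (embS j)) l) := by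
  
  intro kk hk1 hk2
  set J : Finset (Fin n) := Finset.univ.filter (fun j : Fin n => j.val < kk) with hJ
  set r' : Fin n → Fin n := fun j => μ.symm (cyc (μ j)) with hr'
  have hr'inj : Function.Injective r' := by
    intro a b h
    exact μ.injective (cyc_inj (μ.symm.injective h))
  refine ⟨fun t => ∑ j ∈ J, ((if t.val < j.val then (1:ℤ) else 0)
      - (if t.val < (r' j).val then 1 else 0)), ?_, ?_⟩
  · -- nonpositivity
    intro t
    simp only []
    rw [Finset.sum_sub_distrib, Finset.sum_boole, Finset.sum_boole, sub_nonpos, Nat.cast_le]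
    by_cases hcase : kk ≤ t.val + 1
    · have hempty : J.filter (fun j => t.val < j.val) = ∅ := by
        ext j
        simp only [hJ, Finset.mem_filter, Finset.mem_univ, true_and, Finset.notMem_empty,
          iff_false, not_and, not_lt]
        omega
      simp [hempty]
    · -- kk > t + 1
      push_neg at hcase
      have hcardJ : J.card = kk := by
        have : J = Finset.Iio (⟨kk, by omega⟩ : Fin n) := by
          ext j; simp [hJ, Fin.lt_def]
        rw [this, Fin.card_Iio]
      have hsplit1 := Finset.card_filter_add_card_filter_not
        (s := J) (p := fun j => t.val < j.val)
      have hle : (J.filter (fun j => ¬ t.val < j.val)).card = t.val + 1 := by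
        have : J.filter (fun j => ¬ t.val < j.val) = Finset.Iic (⟨t.val, by omega⟩ : Fin n) := by
          ext j
          simp only [Finset.mem_filter, hJ, Finset.mem_univ, true_and, not_lt,
            Finset.mem_Iic, Fin.le_def]
          omega
        rw [this, Fin.card_Iic]
      have hsplit2 := Finset.card_filter_add_card_filter_not
        (s := J) (p := fun j => t.val < (r' j).val)
      have hinj : (J.filter (fun j => ¬ t.val < (r' j).val)).card ≤ t.val + 1 := by
        have hmap : ∀ j ∈ J.filter (fun j => ¬ t.val < (r' j).val),
            r' j ∈ Finset.Iic (⟨t.val, by omega⟩ : Fin n) := by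
          intro j hj
          simp only [Finset.mem_filter, not_lt] at hj
          simpa [Finset.mem_Iic, Fin.le_def] using hj.2
        have := Finset.card_le_card_of_injOn r' hmap hr'inj.injOn
        simpa [Fin.card_Iic] using this
      omega
  · -- the identity
    intro l
    have key : ∀ j : Fin n, z (cyc (μ j)) l - z (μ j) l
        = ∑ t : Fin (n-1), ((if t.val < (r' j).val then (1:ℝ) else 0)
            - if t.val < j.val then 1 else 0) * (z (μ (embS t)) l - z (μ (emb t)) l) := by
      intro j
      simp only [sub_mul, Finset.sum_sub_distrib]
      rw [tel_aux (fun q => z (μ q) l) hn (r' j), tel_aux (fun q => z (μ q) l) hn j]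
      simp only [hr', Equiv.apply_symm_apply]
      ring
    calc ∑ j ∈ J, (z (cyc (μ j)) l - z (μ j) l)
        = ∑ j ∈ J, ∑ t : Fin (n-1), ((if t.val < (r' j).val then (1:ℝ) else 0)
            - if t.val < j.val then 1 else 0) * (z (μ (embS t)) l - z (μ (emb t)) l) :=
          Finset.sum_congr rfl fun j _ => key j
      _ = ∑ t : Fin (n-1), ∑ j ∈ J, ((if t.val < (r' j).val then (1:ℝ) else 0)
            - if t.val < j.val then 1 else 0) * (z (μ (embS t)) l - z (μ (emb t)) l) :=
          Finset.sum_comm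
      _ = ∑ t : Fin (n-1), ((∑ j ∈ J, ((if t.val < j.val then (1:ℤ) else 0)
            - if t.val < (r' j).val then 1 else 0) : ℤ) : ℝ)
            * (z (μ (emb t)) l - z (μ (embS t)) l) := by
          refine Finset.sum_congr rfl fun t _ => ?_
          rw [← Finset.sum_mul]
          push_cast
          simp only [Finset.sum_sub_distrib]
          ring
end
end

section
/- Consider a cyclic mass-action system with n ≥ 2 complexes that is complex balanced at x* ∈ ℝ_{>0}^m, let μ be a permutation of {1, …, n}, and let I ⊆ {1, …, m} be nonempty. If cl(S_μ) ∩ L_I ≠ ∅, then there exists α ∈ ℝ^m with α_i < 0 for all i ∈ I and α_i = 0 for all i ∉ I, such that ⟨α, f(x)⟩ ≤ 0 for every x ∈ cl(S_μ). -/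
set_option linter.unusedSectionVars false
set_option linter.unusedVariables false
set_option maxHeartbeats 1000000


open Filter Topology

noncomputable section

section Farkas

variable {H : Type*} [NormedAddCommGroup H] [InnerProductSpace ℝ H]
  [FiniteDimensional ℝ H] {ι : Type*} [Fintype ι] [DecidableEq ι]

/-- Carathéodory-type reduction for cones: every conical combination can be realized with
linearly independent support. -/
lemma cone_rep_indep (c : ι → H) (s : Finset ι) :
    ∀ lam : ι → ℝ, (∀ j, 0 ≤ lam j) → (∀ j ∉ s, lam j = 0) →
    ∃ (t : Finset ι) (lam' : ι → ℝ), LinearIndependent ℝ (fun j : t => c j) ∧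
      (∀ j, 0 ≤ lam' j) ∧ (∀ j ∉ t, lam' j = 0) ∧ ∑ j, lam' j • c j = ∑ j, lam j • c j := by
  induction s using Finset.strongInductionOn with
  | _ s ih =>
  intro lam h0 hsupp
  by_cases hind : LinearIndependent ℝ (fun j : s => c j)
  · exact ⟨s, lam, hind, h0, hsupp, rfl⟩
  · obtain ⟨g, hg0, i0, hgi0⟩ := Fintype.not_linearIndependent_iff.mp hind
    set gg : ι → ℝ := fun j => if h : j ∈ s then g ⟨j, h⟩ else 0 with hggdef
    have hggsupp : ∀ j ∉ s, gg j = 0 := fun j hj => dif_neg hj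
    have hggsum : ∑ j, gg j • c j = 0 := by
      rw [← Finset.sum_subset (Finset.subset_univ s) (fun j _ hj => by
        rw [hggsupp j hj, zero_smul])]
      rw [← Finset.sum_attach s (fun j => gg j • c j)]
      rw [← hg0]
      exact Finset.sum_congr rfl fun j _ => by simp [hggdef, j.2]
    have key : ∀ G : ι → ℝ, (∀ j ∉ s, G j = 0) → (∑ j, G j • c j = 0) →
        (∃ j ∈ s, 0 < G j) →
        ∃ (t : Finset ι) (lam' : ι → ℝ), LinearIndependent ℝ (fun j : t => c j) ∧
          (∀ j, 0 ≤ lam' j) ∧ (∀ j ∉ t, lam' j = 0) ∧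
          ∑ j, lam' j • c j = ∑ j, lam j • c j := by
      intro G hGsupp hGsum hGpos
      set T : Finset ι := s.filter (fun j => 0 < G j) with hT
      have hTne : T.Nonempty := by
        obtain ⟨j, hjs, hjpos⟩ := hGpos
        exact ⟨j, Finset.mem_filter.mpr ⟨hjs, hjpos⟩⟩
      obtain ⟨j0, hj0T, hj0min⟩ := T.exists_min_image (fun j => lam j / G j) hTne
      have hj0s : j0 ∈ s := (Finset.mem_filter.mp hj0T).1
      have hGj0 : 0 < G j0 := (Finset.mem_filter.mp hj0T).2
      set tstar : ℝ := lam j0 / G j0 with htstar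
      have htstar0 : 0 ≤ tstar := div_nonneg (h0 j0) hGj0.le
      set lam' : ι → ℝ := fun j => lam j - tstar * G j with hlam'
      have hlam'0 : ∀ j, 0 ≤ lam' j := by
        intro j
        by_cases hjpos : 0 < G j
        · have hjs : j ∈ s := by
            by_contra hjs
            rw [hGsupp j hjs] at hjpos; exact lt_irrefl 0 hjpos
          have hjT : j ∈ T := Finset.mem_filter.mpr ⟨hjs, hjpos⟩
          have := hj0min j hjT
          have : tstar * G j ≤ lam j := by
            rw [htstar]
            calc lam j0 / G j0 * G j ≤ lam j / G j * G j := by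
                  apply mul_le_mul_of_nonneg_right this hjpos.le
              _ = lam j := div_mul_cancel₀ _ hjpos.ne'
          simpa [hlam'] using sub_nonneg.mpr this
        · push_neg at hjpos
          have : tstar * G j ≤ 0 := mul_nonpos_of_nonneg_of_nonpos htstar0 hjpos
          have := sub_nonneg.mpr (this.trans (h0 j))
          simp only [hlam']
          nlinarith [h0 j]
      have hlam'supp : ∀ j ∉ s.erase j0, lam' j = 0 := by
        intro j hj
        rw [Finset.mem_erase] at hj
        push_neg at hj
        by_cases hjs : j ∈ s
        · have hjj0 : j = j0 := by
            by_contra hne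
            exact hj hne hjs
          subst hjj0
          simp only [hlam', htstar]
          rw [div_mul_cancel₀ _ hGj0.ne']
          ring
        · simp only [hlam']
          rw [hsupp j hjs, hGsupp j hjs]
          ring
      have hsum' : ∑ j, lam' j • c j = ∑ j, lam j • c j := by
        simp only [hlam', sub_smul, Finset.sum_sub_distrib, mul_smul]
        rw [← Finset.smul_sum, hGsum, smul_zero, sub_zero]
      obtain ⟨t, lam'', h1, h2, h3, h4⟩ :=
        ih (s.erase j0) (Finset.erase_ssubset hj0s) lam' hlam'0 hlam'supp
      exact ⟨t, lam'', h1, h2, h3, h4.trans hsum'⟩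
    by_cases hpos : ∃ j ∈ s, 0 < gg j
    · exact key gg hggsupp hggsum hpos
    · apply key (fun j => -gg j) (fun j hj => by simp [hggsupp j hj])
        (by simp only [neg_smul, Finset.sum_neg_distrib, hggsum, neg_zero])
      push_neg at hpos
      refine ⟨i0, i0.2, ?_⟩
      have : gg i0 = g i0 := by simp [hggdef, i0.2]
      have h1 := hpos i0 i0.2
      simp only [this] at h1 ⊢
      cases' lt_or_eq_of_le h1 with h h
      · linarith
      · exact absurd h hgi0


/-- The conical hull of a finite family is closed. -/
lemma isClosed_cone (c : ι → H) :
    IsClosed {w : H | ∃ lam : ι → ℝ, (∀ j, 0 ≤ lam j) ∧ w = ∑ j, lam j • c j} := by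
  have hrep : {w : H | ∃ lam : ι → ℝ, (∀ j, 0 ≤ lam j) ∧ w = ∑ j, lam j • c j}
      = ⋃ t ∈ {t : Finset ι | LinearIndependent ℝ (fun j : t => c j)},
        {w : H | ∃ lam : ι → ℝ, (∀ j, 0 ≤ lam j) ∧ (∀ j ∉ t, lam j = 0) ∧
          w = ∑ j, lam j • c j} := by
    ext w
    simp only [Set.mem_setOf_eq, Set.mem_iUnion]
    constructor
    · rintro ⟨lam, h0, rfl⟩
      obtain ⟨t, lam', h1, h2, h3, h4⟩ := cone_rep_indep c Finset.univ lam h0 (by simp)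
      exact ⟨t, h1, lam', h2, h3, h4.symm⟩
    · rintro ⟨t, _, lam, h0, _, rfl⟩
      exact ⟨lam, h0, rfl⟩
  rw [hrep]
  apply Set.Finite.isClosed_biUnion (Set.toFinite _)
  intro t hind
  -- the linear map from coefficients on `t` to `H`
  set L : ({j // j ∈ t} → ℝ) →ₗ[ℝ] H := Fintype.linearCombination ℝ (fun j : t => c j)
    with hL
  have hLapp : ∀ q, L q = ∑ j : t, q j • c (j : ι) := by
    intro q
    simp [hL, Fintype.linearCombination_apply]
  have hinj : Function.Injective L := by
    rw [← LinearMap.ker_eq_bot]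
    apply (Submodule.eq_bot_iff _).mpr
    intro q hq
    rw [LinearMap.mem_ker, hLapp] at hq
    funext j
    exact Fintype.linearIndependent_iff.mp hind q hq j
  have hemb : IsClosedEmbedding L := LinearMap.isClosedEmbedding_of_injective
    (LinearMap.ker_eq_bot.mpr hinj)
  have himage : {w : H | ∃ lam : ι → ℝ, (∀ j, 0 ≤ lam j) ∧ (∀ j ∉ t, lam j = 0) ∧
      w = ∑ j, lam j • c j} = L '' {q | ∀ j, 0 ≤ q j} := by
    ext w
    simp only [Set.mem_setOf_eq, Set.mem_image]
    constructor
    · rintro ⟨lam, h0, hsupp, rfl⟩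
      refine ⟨fun j => lam j, fun j => h0 j, ?_⟩
      rw [hLapp]
      rw [← Finset.sum_subset (Finset.subset_univ t) (fun j _ hj => by
        rw [hsupp j hj, zero_smul])]
      exact (Finset.sum_attach t (fun j => lam j • c j))
    · rintro ⟨q, hq, rfl⟩
      refine ⟨fun j => if h : j ∈ t then q ⟨j, h⟩ else 0, ?_, fun j hj => dif_neg hj, ?_⟩
      · intro j
        by_cases h : j ∈ t
        · simp only [dif_pos h]; exact hq _
        · simp only [dif_neg h]; exact le_refl _
      · rw [hLapp]
        rw [← Finset.sum_subset (Finset.subset_univ t) (fun j _ hj => by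
          simp only [dif_neg hj, zero_smul])]
        rw [← Finset.sum_attach t (fun j => (if h : j ∈ t then q ⟨j, h⟩ else 0) • c j)]
        exact Finset.sum_congr rfl fun j _ => by simp only [dif_pos j.2]
  rw [himage]
  apply hemb.isClosedMap
  have : {q : {j // j ∈ t} → ℝ | ∀ j, 0 ≤ q j} = ⋂ j, {q | 0 ≤ q j} := by
    ext q; simp [Set.mem_iInter]
  rw [this]
  exact isClosed_iInter fun j => isClosed_le continuous_const (continuous_apply j)

open scoped InnerProductSpace in
/-- **Farkas' lemma**. -/
lemma farkas_cone [CompleteSpace H] (c : ι → H) (b : H)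
    (hb : ∀ y : H, (∀ j, 0 ≤ ⟪c j, y⟫_ℝ) → 0 ≤ ⟪b, y⟫_ℝ) :
    ∃ lam : ι → ℝ, (∀ j, 0 ≤ lam j) ∧ b = ∑ j, lam j • c j := by
  by_contra hcon
  set Kset : Set H := {w : H | ∃ lam : ι → ℝ, (∀ j, 0 ≤ lam j) ∧ w = ∑ j, lam j • c j}
    with hKset
  have hbK : b ∉ Kset := by
    intro ⟨lam, h1, h2⟩
    exact hcon ⟨lam, h1, h2⟩
  set K : ConvexCone ℝ H :=
    { carrier := Kset
      smul_mem' := by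
        rintro r hr w ⟨lam, h0, rfl⟩
        refine ⟨fun j => r * lam j, fun j => mul_nonneg hr.le (h0 j), ?_⟩
        rw [Finset.smul_sum]
        exact Finset.sum_congr rfl fun j _ => (mul_smul r (lam j) (c j)).symm
      add_mem' := by
        rintro w ⟨lam, h0, rfl⟩ w' ⟨lam', h0', rfl⟩
        refine ⟨fun j => lam j + lam' j, fun j => add_nonneg (h0 j) (h0' j), ?_⟩
        rw [← Finset.sum_add_distrib]
        exact Finset.sum_congr rfl fun j _ => (add_smul _ _ _).symm } with hK
  have hne : (K : Set H).Nonempty := ⟨0, ⟨fun _ => 0, fun _ => le_refl _, by simp⟩⟩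
  have hcl : IsClosed (K : Set H) := isClosed_cone c
  obtain ⟨y, hy1, hy2⟩ :=
    ProperCone.hyperplane_separation' (x₀ := b)
      ({ carrier := Kset
         add_mem' := fun ha hb => K.add_mem' ha hb
         zero_mem' := ⟨fun _ => 0, fun _ => le_refl _, by simp⟩
         smul_mem' := by
           rintro ⟨r, hr⟩ w ⟨lam, h0, rfl⟩
           refine ⟨fun j => r * lam j, fun j => mul_nonneg hr (h0 j), ?_⟩
           show r • ∑ j, lam j • c j = _
           rw [Finset.smul_sum]
           exact Finset.sum_congr rfl fun j _ => (mul_smul r (lam j) (c j)).symm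
         isClosed' := hcl } : ProperCone ℝ H) hbK
  have hcj : ∀ j, 0 ≤ ⟪c j, y⟫_ℝ := by
    intro j
    apply hy1
    refine ⟨fun i => if i = j then 1 else 0, fun i => by positivity, ?_⟩
    have : ∀ i : ι, (if i = j then (1:ℝ) else 0) • c i = if i = j then c j else 0 := by
      intro i
      by_cases h : i = j
      · subst h; simp
      · simp [h]
    simp only [this, Finset.sum_ite_eq' Finset.univ j (fun _ => c j), Finset.mem_univ, if_true]
  have := hb y hcj
  rw [real_inner_comm] at this hy2
  linarith

end Farkas

open scoped InnerProductSpace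

section DualAlt

variable {m nn : ℕ}

lemma euclid_inner_eq (v y : EuclideanSpace ℝ (Fin m)) : ⟪v, y⟫_ℝ = ∑ l, v l * y l := by
  simp [PiLp.inner_apply, RCLike.inner_apply, conj_trivial]
  exact Finset.sum_congr rfl fun _ _ => mul_comm _ _

lemma dual_alternative (d : Fin nn → Fin m → ℝ) (I : Finset (Fin m)) :
    (∃ α : Fin m → ℝ, (∀ l ∈ I, α l < 0) ∧ (∀ l ∉ I, α l = 0) ∧
      ∀ i, 0 ≤ ∑ l, d i l * α l) ∨
    (∃ lam : Fin nn → ℝ, (∀ i, 0 ≤ lam i) ∧ (∀ l ∈ I, 0 ≤ ∑ i, lam i * d i l) ∧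
      0 < ∑ l ∈ I, ∑ i, lam i * d i l) := by
  classical
  by_cases hA : ∃ α : Fin m → ℝ, (∀ l ∈ I, α l < 0) ∧ (∀ l ∉ I, α l = 0) ∧
      ∀ i, 0 ≤ ∑ l, d i l * α l
  · exact Or.inl hA
  right
  set O : Set (EuclideanSpace ℝ (Fin m)) := {y | ∀ l ∈ I, y l < 0} with hO
  set M : Set (EuclideanSpace ℝ (Fin m)) :=
    {y | (∀ l ∉ I, y l = 0) ∧ ∀ i, 0 ≤ ∑ l, d i l * y l} with hM
  have hdisj : Disjoint O M := by
    rw [Set.disjoint_left]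
    rintro y hyO ⟨hy1, hy2⟩
    exact hA ⟨(fun l => y l), hyO, hy1, hy2⟩
  have hOopen : IsOpen O := by
    have : O = ⋂ l ∈ (I : Set (Fin m)), {y : EuclideanSpace ℝ (Fin m) | y l < 0} := by
      ext y; simp [hO]
    rw [this]
    exact (I : Set (Fin m)).toFinite.isOpen_biInter fun l _ =>
      isOpen_lt (EuclideanSpace.proj l).continuous continuous_const
  have hOconv : Convex ℝ O := by
    intro x hx y hy a b ha hb hab
    intro l hl
    have h1 : (a • x + b • y) l = a * x l + b * y l := rfl
    rw [Set.mem_setOf_eq] at hx hy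
    show (a • x + b • y) l < 0
    rw [h1]
    rcases eq_or_lt_of_le ha with ha0 | hapos
    · have hb1 : b = 1 := by linarith
      rw [← ha0, hb1]; simpa using hy l hl
    · nlinarith [hx l hl, hy l hl]
  have hMconv : Convex ℝ M := by
    intro x hx y hy a b ha hb hab
    rw [Set.mem_setOf_eq] at hx hy ⊢
    constructor
    · intro l hl
      show a * x l + b * y l = 0
      rw [hx.1 l hl, hy.1 l hl]; ring
    · intro i
      have e1 : ∀ l, d i l * ((a • x + b • y) l) = a * (d i l * x l) + b * (d i l * y l) := by
        intro l
        have : (a • x + b • y) l = a * x l + b * y l := rfl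
        rw [this]; ring
      rw [Finset.sum_congr rfl (fun l _ => e1 l), Finset.sum_add_distrib,
        ← Finset.mul_sum, ← Finset.mul_sum]
      exact add_nonneg (mul_nonneg ha (hx.2 i)) (mul_nonneg hb (hy.2 i))
  obtain ⟨f, u, hfO, hfM⟩ := geometric_hahn_banach_open hOconv hOopen hMconv hdisj
  have h0M : (0 : EuclideanSpace ℝ (Fin m)) ∈ M := by
    refine ⟨fun l _ => rfl, fun i => ?_⟩
    simp
  have hu0 : u ≤ 0 := by simpa using hfM 0 h0M
  set t0 : EuclideanSpace ℝ (Fin m) := WithLp.toLp 2 (fun l => if l ∈ I then (-1:ℝ) else 0) with ht0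
  have ht0O : ∀ ε : ℝ, 0 < ε → (ε • t0) ∈ O := by
    intro ε hε l hl
    show ε * t0 l < 0
    have : t0 l = -1 := by rw [ht0]; exact if_pos hl
    rw [this]; linarith
  have hu0' : 0 ≤ u := by
    by_contra hu; push_neg at hu
    rcases le_or_gt 0 (f t0) with hf0 | hf0
    · have h1 := hfO _ (ht0O 1 one_pos)
      rw [one_smul] at h1; linarith
    · have h2 := hfO _ (ht0O (u / f t0) (div_pos_of_neg_of_neg hu hf0))
      rw [map_smul, smul_eq_mul, div_mul_cancel₀ _ hf0.ne] at h2
      exact lt_irrefl u h2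
  have huu : u = 0 := le_antisymm hu0 hu0'
  set w : EuclideanSpace ℝ (Fin m) :=
    (InnerProductSpace.toDual ℝ (EuclideanSpace ℝ (Fin m))).symm f with hwdef
  have hw : ∀ t, ⟪w, t⟫_ℝ = f t := fun t => InnerProductSpace.toDual_symm_apply
  have hwsum : ∀ t : EuclideanSpace ℝ (Fin m), f t = ∑ l, w l * t l := fun t => by
    rw [← hw, euclid_inner_eq]
  -- (a) nonnegativity of w on I
  have hha : ∀ l0 ∈ I, 0 ≤ w l0 := by
    intro l0 hl0
    set S1 := ∑ l ∈ I.erase l0, w l with hS1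
    by_contra hneg; push_neg at hneg
    set ε := (-w l0) / (2 * (|S1| + 1)) with hε
    have hεpos : 0 < ε := div_pos (by linarith) (by positivity)
    set tt : EuclideanSpace ℝ (Fin m) :=
      WithLp.toLp 2 (fun l => if l = l0 then (-1:ℝ) else if l ∈ I then -ε else 0) with htt
    have httO : tt ∈ O := by
      intro l hl
      show (if l = l0 then (-1:ℝ) else if l ∈ I then -ε else 0) < 0
      by_cases h : l = l0
      · rw [if_pos h]; linarith
      · rw [if_neg h, if_pos hl]; linarith
    have h2 := hfO tt httO
    rw [hwsum, huu] at h2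
    have e1 : ∑ l, w l * tt l = -w l0 - ε * S1 := by
      rw [← Finset.sum_add_sum_compl I (fun l => w l * tt l)]
      have ecompl : ∑ l ∈ Iᶜ, w l * tt l = 0 := by
        apply Finset.sum_eq_zero
        intro l hl
        have hlI : l ∉ I := Finset.mem_compl.mp hl
        have hne : l ≠ l0 := fun h => hlI (h ▸ hl0)
        show w l * (if l = l0 then (-1:ℝ) else if l ∈ I then -ε else 0) = 0
        rw [if_neg hne, if_neg hlI, mul_zero]
      rw [ecompl, add_zero, ← Finset.add_sum_erase _ _ hl0]
      have eterm : w l0 * tt l0 = -w l0 := by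
        show w l0 * (if l0 = l0 then (-1:ℝ) else if l0 ∈ I then -ε else 0) = -w l0
        rw [if_pos rfl]; ring
      have eerase : ∑ l ∈ I.erase l0, w l * tt l = -(ε * S1) := by
        rw [hS1, Finset.mul_sum, ← Finset.sum_neg_distrib]
        apply Finset.sum_congr rfl
        intro l hl
        have hne : l ≠ l0 := Finset.ne_of_mem_erase hl
        have hlI : l ∈ I := Finset.mem_of_mem_erase hl
        show w l * (if l = l0 then (-1:ℝ) else if l ∈ I then -ε else 0) = -(ε * w l)
        rw [if_neg hne, if_pos hlI]; ring
      rw [eterm, eerase]; ring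
    rw [e1] at h2
    have h2e : -w l0 < ε * S1 := by linarith
    have habs : ε * S1 ≤ ε * |S1| := mul_le_mul_of_nonneg_left (le_abs_self S1) hεpos.le
    have hden : (0:ℝ) < 2 * (|S1| + 1) := by positivity
    have heq : ε * (2 * (|S1| + 1)) = -w l0 := div_mul_cancel₀ _ hden.ne'
    nlinarith [abs_nonneg S1]
  -- (b) positivity of the sum of w over I
  have hhb : 0 < ∑ l ∈ I, w l := by
    have ht0O' : t0 ∈ O := by
      intro l hl
      show (if l ∈ I then (-1:ℝ) else 0) < 0
      rw [if_pos hl]; linarith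
    have h1 := hfO t0 ht0O'
    rw [hwsum, huu] at h1
    have e1 : ∑ l, w l * t0 l = -∑ l ∈ I, w l := by
      rw [← Finset.sum_add_sum_compl I (fun l => w l * t0 l)]
      have ecompl : ∑ l ∈ Iᶜ, w l * t0 l = 0 := by
        apply Finset.sum_eq_zero
        intro l hl
        have hlI : l ∉ I := Finset.mem_compl.mp hl
        show w l * (if l ∈ I then (-1:ℝ) else 0) = 0
        rw [if_neg hlI, mul_zero]
      rw [ecompl, add_zero, ← Finset.sum_neg_distrib]
      apply Finset.sum_congr rfl
      intro l hl
      show w l * (if l ∈ I then (-1:ℝ) else 0) = -w l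
      rw [if_pos hl]; ring
    rw [e1] at h1; linarith
  -- Farkas
  set cc : (Fin nn ⊕ (Fin m ⊕ Fin m)) → EuclideanSpace ℝ (Fin m) := fun j =>
    match j with
    | .inl i => WithLp.toLp 2 (fun l => d i l)
    | .inr (.inl l) => if l ∈ I then 0 else WithLp.toLp 2 (fun l' => if l' = l then 1 else 0)
    | .inr (.inr l) => if l ∈ I then 0 else WithLp.toLp 2 (fun l' => if l' = l then -1 else 0)
    with hcc
  have hyp : ∀ y, (∀ j, 0 ≤ ⟪cc j, y⟫_ℝ) → 0 ≤ ⟪w, y⟫_ℝ := by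
    intro y hy
    have hyoff : ∀ l ∉ I, y l = 0 := by
      intro l hl
      have h1 := hy (.inr (.inl l))
      have h2 := hy (.inr (.inr l))
      rw [euclid_inner_eq] at h1 h2
      have ec1 : ∀ l', (cc (.inr (.inl l))) l' = if l' = l then 1 else 0 := by
        intro l'; rw [hcc]; simp only [if_neg hl]
      have ec2 : ∀ l', (cc (.inr (.inr l))) l' = if l' = l then -1 else 0 := by
        intro l'; rw [hcc]; simp only [if_neg hl]
      rw [Finset.sum_congr rfl (fun l' _ => by rw [ec1 l'])] at h1
      rw [Finset.sum_congr rfl (fun l' _ => by rw [ec2 l'])] at h2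
      simp only [ite_mul, one_mul, zero_mul, neg_mul, neg_zero,
        Finset.sum_ite_eq', Finset.mem_univ, if_true] at h1 h2
      linarith
    have hyd : ∀ i, 0 ≤ ∑ l, d i l * y l := by
      intro i
      have h1 := hy (.inl i)
      rw [euclid_inner_eq] at h1
      exact h1
    have hyM : y ∈ M := ⟨hyoff, hyd⟩
    rw [hw]
    have := hfM y hyM
    linarith
  obtain ⟨lam, hlam0, hwrep⟩ := farkas_cone cc w hyp
  have hwl : ∀ l ∈ I, w l = ∑ i, lam (.inl i) * d i l := by
    intro l hl
    set el : EuclideanSpace ℝ (Fin m) := WithLp.toLp 2 (fun l' => if l' = l then (1:ℝ) else 0) with hel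
    have h1 : ⟪w, el⟫_ℝ = w l := by
      rw [euclid_inner_eq]
      have : ∀ l', w l' * el l' = if l' = l then w l' else 0 := by
        intro l'
        show w l' * (if l' = l then 1 else 0) = _
        by_cases h : l' = l
        · rw [if_pos h, if_pos h]; ring
        · rw [if_neg h, if_neg h]; ring
      rw [Finset.sum_congr rfl (fun l' _ => this l')]
      rw [Finset.sum_ite_eq' Finset.univ l (fun l' => w l')]
      simp
    have h2 : ⟪w, el⟫_ℝ = ∑ j, lam j * ⟪cc j, el⟫_ℝ := by
      conv_lhs => rw [hwrep]
      rw [sum_inner]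
      exact Finset.sum_congr rfl fun j _ => real_inner_smul_left _ _ _
    have hccel : ∀ j, ⟪cc j, el⟫_ℝ = match j with
        | .inl i => d i l
        | .inr _ => 0 := by
      intro j
      match j with
      | .inl i =>
        rw [euclid_inner_eq]
        have : ∀ l', (cc (.inl i)) l' * el l' = if l' = l then d i l' else 0 := by
          intro l'
          show d i l' * (if l' = l then 1 else 0) = _
          by_cases h : l' = l
          · rw [if_pos h, if_pos h]; ring
          · rw [if_neg h, if_neg h]; ring
        rw [Finset.sum_congr rfl (fun l' _ => this l')]
        rw [Finset.sum_ite_eq' Finset.univ l (fun l' => d i l')]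
        simp
      | .inr (.inl l1) =>
        by_cases hl1 : l1 ∈ I
        · have : cc (.inr (.inl l1)) = 0 := by rw [hcc]; simp only [if_pos hl1]
          rw [this, inner_zero_left]
        · rw [euclid_inner_eq]
          apply Finset.sum_eq_zero
          intro l' _
          have hne : l' = l1 → l' ≠ l := by
            rintro rfl h; rw [h] at hl1; exact hl1 hl
          show (cc (.inr (.inl l1))) l' * el l' = 0
          have e1 : (cc (.inr (.inl l1))) l' = if l' = l1 then 1 else 0 := by
            rw [hcc]; simp only [if_neg hl1]
          rw [e1]
          by_cases h : l' = l1
          · rw [if_pos h]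
            show 1 * (if l' = l then 1 else 0) = 0
            rw [if_neg (hne h)]; ring
          · rw [if_neg h]; ring
      | .inr (.inr l1) =>
        by_cases hl1 : l1 ∈ I
        · have : cc (.inr (.inr l1)) = 0 := by rw [hcc]; simp only [if_pos hl1]
          rw [this, inner_zero_left]
        · rw [euclid_inner_eq]
          apply Finset.sum_eq_zero
          intro l' _
          have hne : l' = l1 → l' ≠ l := by
            rintro rfl h; rw [h] at hl1; exact hl1 hl
          show (cc (.inr (.inr l1))) l' * el l' = 0
          have e1 : (cc (.inr (.inr l1))) l' = if l' = l1 then -1 else 0 := by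
            rw [hcc]; simp only [if_neg hl1]
          rw [e1]
          by_cases h : l' = l1
          · rw [if_pos h]
            show (-1) * (if l' = l then 1 else 0) = 0
            rw [if_neg (hne h)]; ring
          · rw [if_neg h]; ring
    rw [Finset.sum_congr rfl (fun j _ => by rw [hccel j])] at h2
    rw [Fintype.sum_sum_type] at h2
    simp only [mul_zero, Finset.sum_const_zero, add_zero] at h2
    rw [← h1, h2]
  refine ⟨fun i => lam (.inl i), fun i => hlam0 _, ?_, ?_⟩
  · intro l hl; rw [← hwl l hl]; exact hha l hl
  · have := Finset.sum_congr rfl hwl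
    rw [← this]
    exact hhb

end DualAlt

section Helpers

/-- `cyc` agrees with `finRotate`. -/
lemma cyc_eq_finRotate {n2 : ℕ} (i : Fin (n2 + 2)) : cyc i = finRotate (n2 + 2) i := by
  rw [finRotate_succ_apply]
  apply Fin.ext
  rw [Fin.val_add]
  simp [cyc]

/-- chain an adjacent inequality into antitonicity along positions. -/
lemma chain_le {n : ℕ} (R : Fin n → ℝ) (hR : ∀ i : Fin (n - 1), R (embS i) ≤ R (emb i)) :
    ∀ p q : Fin n, p ≤ q → R q ≤ R p := by
  have key : ∀ (qv : ℕ) (hq : qv < n) (pv : ℕ) (hp : pv < n), pv ≤ qv →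
      R ⟨qv, hq⟩ ≤ R ⟨pv, hp⟩ := by
    intro qv
    induction qv with
    | zero =>
      intro hq pv hp hpq
      have : pv = 0 := by omega
      subst this
      exact le_refl _
    | succ qv ih =>
      intro hq pv hp hpq
      rcases Nat.eq_or_lt_of_le hpq with heq | hlt
      · subst heq; exact le_refl _
      · have hpq' : pv ≤ qv := by omega
        have hqn : qv < n := by omega
        have step : R ⟨qv + 1, hq⟩ ≤ R ⟨qv, hqn⟩ := by
          have hi : qv < n - 1 := by omega
          exact hR ⟨qv, hi⟩
        exact step.trans (ih hqn pv hp hpq')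
  intro p q hpq
  have := key q.val q.isLt p.val p.isLt (Fin.le_def.mp hpq)
  simpa using this

lemma ratio_cont {m : ℕ} (xstar : Fin m → ℝ) (zv : Fin m → ℕ) :
    Continuous (fun x : Fin m → ℝ => ratio xstar x zv) := by
  unfold ratio
  apply continuous_finset_prod
  intro l _
  exact ((continuous_apply l).div_const _).pow _

lemma closure_ratio_le {m n : ℕ} (z : Fin n → Fin m → ℕ) (xstar : Fin m → ℝ)
    (μ : Equiv.Perm (Fin n)) {x : Fin m → ℝ} (hx : x ∈ closure (stratum z xstar μ)) :
    ∀ i : Fin (n - 1), ratio xstar x (z (μ (embS i))) ≤ ratio xstar x (z (μ (emb i))) := by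
  have hsub : closure (stratum z xstar μ) ⊆
      {x | ∀ i : Fin (n - 1),
        ratio xstar x (z (μ (embS i))) ≤ ratio xstar x (z (μ (emb i)))} := by
    apply closure_minimal
    · intro y hy i
      exact le_of_lt (hy.2 i)
    · have : {x : Fin m → ℝ | ∀ i : Fin (n - 1),
          ratio xstar x (z (μ (embS i))) ≤ ratio xstar x (z (μ (emb i)))}
          = ⋂ i : Fin (n - 1), {x | ratio xstar x (z (μ (embS i)))
            ≤ ratio xstar x (z (μ (emb i)))} := by
        ext y; simp [Set.mem_iInter]
      rw [this]
      exact isClosed_iInter fun i =>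
        isClosed_le (ratio_cont xstar _) (ratio_cont xstar _)
  exact hsub hx

lemma mono_eq_mono_mul_ratio {m : ℕ} (zv : Fin m → ℕ) (xstar x : Fin m → ℝ)
    (hxs : ∀ l, 0 < xstar l) :
    mono zv x = mono zv xstar * ratio xstar x zv := by
  unfold mono ratio
  rw [← Finset.prod_mul_distrib]
  apply Finset.prod_congr rfl
  intro l _
  rw [div_pow]
  rw [mul_div_assoc']
  rw [mul_comm, mul_div_assoc]
  rw [div_self (pow_ne_zero _ (hxs l).ne'), mul_one]

lemma mono_pos {m : ℕ} (zv : Fin m → ℕ) (x : Fin m → ℝ) (hx : ∀ l, 0 < x l) :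
    0 < mono zv x := by
  unfold mono
  exact Finset.prod_pos fun l _ => pow_pos (hx l) _

lemma ratio_pos {m : ℕ} (zv : Fin m → ℕ) (xstar x : Fin m → ℝ) (hxs : ∀ l, 0 < xstar l)
    (hx : ∀ l, 0 < x l) : 0 < ratio xstar x zv := by
  unfold ratio
  exact Finset.prod_pos fun l _ => pow_pos (div_pos (hx l) (hxs l)) _

lemma log_ratio {m : ℕ} (zv : Fin m → ℕ) (xstar x : Fin m → ℝ) (hxs : ∀ l, 0 < xstar l)
    (hx : ∀ l, 0 < x l) :
    Real.log (ratio xstar x zv) = ∑ l, (zv l : ℝ) * Real.log (x l / xstar l) := by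
  unfold ratio
  rw [Real.log_prod]
  · apply Finset.sum_congr rfl
    intro l _
    rw [Real.log_pow]
  · intro l _
    exact pow_ne_zero _ (div_pos (hx l) (hxs l)).ne'

/-- The constant `k i (cyc i) * mono (z i) x*` around the cycle. -/
lemma kmono_const {m n : ℕ} (hn : 2 ≤ n) (z : Fin n → Fin m → ℕ)
    (k : Fin n → Fin n → ℝ) (hcyc : isCyclic k) (xstar : Fin m → ℝ)
    (hcb : complexBalanced z k xstar) :
    ∀ i : Fin n, k i (cyc i) * mono (z i) xstar
      = k ⟨0, by omega⟩ (cyc ⟨0, by omega⟩) * mono (z ⟨0, by omega⟩) xstar := by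
  obtain ⟨n2, rfl⟩ : ∃ n2, n = n2 + 2 := ⟨n - 2, by omega⟩
  have hcycinj : Function.Injective (cyc : Fin (n2 + 2) → Fin (n2 + 2)) := by
    intro a b hab
    rw [cyc_eq_finRotate, cyc_eq_finRotate] at hab
    exact (finRotate _).injective hab
  have hstep : ∀ j : Fin (n2 + 2), k j (cyc j) * mono (z j) xstar
      = k (cyc j) (cyc (cyc j)) * mono (z (cyc j)) xstar := by
    intro j
    have hc := hcb (cyc j)
    have hL : ∑ i, k i (cyc j) * mono (z i) xstar = k j (cyc j) * mono (z j) xstar := by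
      apply Finset.sum_eq_single j
      · intro i _ hij
        have : cyc j ≠ cyc i := fun hc => hij (hcycinj hc.symm)
        rw [hcyc.2 i (cyc j) this, zero_mul]
      · intro h; exact absurd (Finset.mem_univ j) h
    have hRr : ∑ i, k (cyc j) i = k (cyc j) (cyc (cyc j)) := by
      apply Finset.sum_eq_single (cyc (cyc j))
      · intro i _ hij
        exact hcyc.2 (cyc j) i hij
      · intro h; exact absurd (Finset.mem_univ _) h
    rw [hL, hRr] at hc
    rw [hc]; ring
  have key : ∀ (v : ℕ) (hv : v < n2 + 2), k ⟨v, hv⟩ (cyc ⟨v, hv⟩) * mono (z ⟨v, hv⟩) xstar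
      = k ⟨0, by omega⟩ (cyc ⟨0, by omega⟩) * mono (z ⟨0, by omega⟩) xstar := by
    intro v
    induction v with
    | zero => intro hv; rfl
    | succ v ih =>
      intro hv
      have hvlt : v < n2 + 2 := by omega
      have hcv : cyc ⟨v, hvlt⟩ = ⟨v + 1, hv⟩ := by
        apply Fin.ext
        simp [cyc, Nat.mod_eq_of_lt hv]
      have hs2 := hstep ⟨v, hvlt⟩
      rw [← ih hvlt, hs2, hcv]
  intro i
  exact key i.val i.isLt

end Helpers

section Main

variable {m n : ℕ}

lemma main_ineq (hn : 2 ≤ n) (z : Fin n → Fin m → ℕ) (k : Fin n → Fin n → ℝ)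
    (hcyc : isCyclic k) (xstar : Fin m → ℝ) (hxs : ∀ l, 0 < xstar l)
    (hcb : complexBalanced z k xstar) (μ : Equiv.Perm (Fin n)) (α : Fin m → ℝ)
    (hα : ∀ i : Fin (n - 1),
      0 ≤ ∑ l, ((z (μ (emb i)) l : ℝ) - (z (μ (embS i)) l : ℝ)) * α l) :
    ∀ x ∈ closure (stratum z xstar μ), ∑ l, α l * maf z k x l ≤ 0 := by
  obtain ⟨n2, rfl⟩ : ∃ n2, n = n2 + 2 := ⟨n - 2, by omega⟩
  set e : Equiv.Perm (Fin (n2 + 2)) := finRotate (n2 + 2) with he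
  set a : Fin (n2 + 2) → ℝ := fun j => ∑ l, α l * (z j l : ℝ) with ha
  set c : ℝ := k ⟨0, by omega⟩ (cyc ⟨0, by omega⟩) * mono (z ⟨0, by omega⟩) xstar with hcdef
  have hc0 : 0 < c := mul_pos (hcyc.1 _) (mono_pos _ _ hxs)
  have hamono : ∀ i : Fin (n2 + 2 - 1), a (μ (embS i)) ≤ a (μ (emb i)) := by
    intro i
    have h1 := hα i
    have h2 : ∑ l, ((z (μ (emb i)) l : ℝ) - (z (μ (embS i)) l : ℝ)) * α l
        = a (μ (emb i)) - a (μ (embS i)) := by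
      rw [ha, ← Finset.sum_sub_distrib]
      apply Finset.sum_congr rfl
      intro l _; ring
    rw [h2] at h1
    linarith
  intro x hx
  set r : Fin (n2 + 2) → ℝ := fun j => ratio xstar x (z j) with hr
  have hRadj := closure_ratio_le z xstar μ hx
  have hmono : Monovary r a := by
    intro i j hij
    rcases le_or_gt (μ.symm j) (μ.symm i) with hle | hlt
    · have h3 := chain_le (fun p => ratio xstar x (z (μ p))) (fun i' => hRadj i')
        (μ.symm j) (μ.symm i) hle
      simpa [hr, Equiv.apply_symm_apply] using h3
    · exfalso
      have h3 := chain_le (fun p => a (μ p)) (fun i' => hamono i')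
        (μ.symm i) (μ.symm j) hlt.le
      simp only [Equiv.apply_symm_apply] at h3
      linarith
  have h1 : ∑ l, α l * maf z k x l
      = ∑ i, ∑ j, k i j * mono (z i) x * (a j - a i) := by
    unfold maf
    calc ∑ l, α l * ∑ i, ∑ j, k i j * ((z j l : ℝ) - (z i l : ℝ)) * mono (z i) x
        = ∑ l, ∑ i, ∑ j, α l * (k i j * ((z j l : ℝ) - (z i l : ℝ)) * mono (z i) x) := by
          apply Finset.sum_congr rfl
          intro l _
          rw [Finset.mul_sum]
          apply Finset.sum_congr rfl
          intro i _
          rw [Finset.mul_sum]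
      _ = ∑ i, ∑ l, ∑ j, α l * (k i j * ((z j l : ℝ) - (z i l : ℝ)) * mono (z i) x) :=
          Finset.sum_comm
      _ = ∑ i, ∑ j, ∑ l, α l * (k i j * ((z j l : ℝ) - (z i l : ℝ)) * mono (z i) x) := by
          exact Finset.sum_congr rfl fun i _ => Finset.sum_comm
      _ = ∑ i, ∑ j, k i j * mono (z i) x * (a j - a i) := by
          apply Finset.sum_congr rfl
          intro i _
          apply Finset.sum_congr rfl
          intro j _
          simp only [ha]
          rw [← Finset.sum_sub_distrib, Finset.mul_sum]
          apply Finset.sum_congr rfl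
          intro l _; ring
  have h2 : ∀ i, ∑ j, k i j * mono (z i) x * (a j - a i)
      = k i (cyc i) * mono (z i) x * (a (cyc i) - a i) := by
    intro i
    apply Finset.sum_eq_single (cyc i)
    · intro j _ hj
      rw [hcyc.2 i j hj, zero_mul, zero_mul]
    · intro hmem; exact absurd (Finset.mem_univ _) hmem
  have h3 : ∀ i, k i (cyc i) * mono (z i) x = c * r i := by
    intro i
    rw [mono_eq_mono_mul_ratio (z i) xstar x hxs, ← mul_assoc,
      kmono_const (by omega) z k hcyc xstar hcb i]
  have h4 : ∑ l, α l * maf z k x l = c * (∑ i, r i * a (e i) - ∑ i, r i * a i) := by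
    rw [h1, Finset.sum_congr rfl fun i _ => h2 i]
    rw [← Finset.sum_sub_distrib, Finset.mul_sum]
    apply Finset.sum_congr rfl
    intro i _
    rw [h3 i, ← cyc_eq_finRotate]
    ring
  rw [h4]
  have hrear : ∑ i, r i * a (e i) ≤ ∑ i, r i * a i := by
    have := hmono.sum_smul_comp_perm_le_sum_smul (σ := e)
    simpa [smul_eq_mul] using this
  exact mul_nonpos_of_nonneg_of_nonpos hc0.le (by linarith)

lemma no_second (hn : 2 ≤ n) (z : Fin n → Fin m → ℕ) (xstar : Fin m → ℝ)
    (hxs : ∀ l, 0 < xstar l) (μ : Equiv.Perm (Fin n)) (I : Finset (Fin m))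
    (h : (closure (stratum z xstar μ) ∩ LI I).Nonempty)
    (lam : Fin (n - 1) → ℝ) (hlam0 : ∀ i, 0 ≤ lam i)
    (hw1 : ∀ l ∈ I, 0 ≤ ∑ i, lam i * ((z (μ (emb i)) l : ℝ) - (z (μ (embS i)) l : ℝ)))
    (hw2 : 0 < ∑ l ∈ I, ∑ i, lam i * ((z (μ (emb i)) l : ℝ) - (z (μ (embS i)) l : ℝ))) :
    False := by
  classical
  set d : Fin (n - 1) → Fin m → ℝ :=
    fun i l => (z (μ (emb i)) l : ℝ) - (z (μ (embS i)) l : ℝ) with hd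
  set W : Fin m → ℝ := fun l => ∑ i, lam i * d i l with hW
  obtain ⟨x0, hx0cl, hx0LI⟩ := h
  obtain ⟨xs, hxsS, hxslim⟩ := mem_closure_iff_seq_limit.mp hx0cl
  obtain ⟨ls, hlsI, hls⟩ : ∃ l ∈ I, 0 < W l := by
    by_contra hc; push_neg at hc
    have := Finset.sum_nonpos hc
    rw [hW] at this
    exact absurd hw2 (by simp only [hd] at this ⊢; linarith)
  have hcoord : ∀ l, Tendsto (fun kk => xs kk l) atTop (𝓝 (x0 l)) := fun l =>
    (tendsto_pi_nhds.mp hxslim l)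
  have hG : ∀ kk, 0 ≤ ∑ l ∈ I, W l * Real.log (xs kk l / xstar l)
      + ∑ l ∈ Iᶜ, W l * Real.log (xs kk l / xstar l) := by
    intro kk
    have hxk := hxsS kk
    have hsum : ∑ l ∈ I, W l * Real.log (xs kk l / xstar l)
        + ∑ l ∈ Iᶜ, W l * Real.log (xs kk l / xstar l)
        = ∑ i, lam i * ∑ l, d i l * Real.log (xs kk l / xstar l) := by
      rw [Finset.sum_add_sum_compl I (fun l => W l * Real.log (xs kk l / xstar l))]
      calc ∑ l, W l * Real.log (xs kk l / xstar l)
          = ∑ l, ∑ i, lam i * (d i l * Real.log (xs kk l / xstar l)) := by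
            apply Finset.sum_congr rfl
            intro l _
            rw [hW, Finset.sum_mul]
            apply Finset.sum_congr rfl
            intro i _; ring
        _ = ∑ i, ∑ l, lam i * (d i l * Real.log (xs kk l / xstar l)) := Finset.sum_comm
        _ = ∑ i, lam i * ∑ l, d i l * Real.log (xs kk l / xstar l) := by
            apply Finset.sum_congr rfl
            intro i _
            rw [Finset.mul_sum]
    rw [hsum]
    apply Finset.sum_nonneg
    intro i _
    apply mul_nonneg (hlam0 i)
    have hlog : ∑ l, d i l * Real.log (xs kk l / xstar l)
        = Real.log (ratio xstar (xs kk) (z (μ (emb i))))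
          - Real.log (ratio xstar (xs kk) (z (μ (embS i)))) := by
      rw [log_ratio _ _ _ hxs hxk.1, log_ratio _ _ _ hxs hxk.1, ← Finset.sum_sub_distrib]
      apply Finset.sum_congr rfl
      intro l _
      rw [hd]; ring
    rw [hlog]
    have hgt := hxk.2 i
    have hpos := ratio_pos (z (μ (embS i))) xstar (xs kk) hxs hxk.1
    have := Real.log_le_log hpos hgt.le
    linarith
  set b0 : ℝ := ∑ l ∈ Iᶜ, W l * Real.log (x0 l / xstar l) with hb0
  have hB : Tendsto (fun kk => ∑ l ∈ Iᶜ, W l * Real.log (xs kk l / xstar l)) atTop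
      (𝓝 b0) := by
    apply tendsto_finset_sum
    intro l hl
    have hx0l : 0 < x0 l := hx0LI.2 l (Finset.mem_compl.mp hl)
    apply Tendsto.const_mul
    have hdiv : Tendsto (fun kk => xs kk l / xstar l) atTop (𝓝 (x0 l / xstar l)) :=
      (hcoord l).div_const _
    have hne : x0 l / xstar l ≠ 0 := ne_of_gt (div_pos hx0l (hxs l))
    exact ((Real.continuousAt_log hne).tendsto).comp hdiv
  have hlimls : Tendsto (fun kk => xs kk ls / xstar ls) atTop (𝓝[>] (0:ℝ)) := by
    have h0 : Tendsto (fun kk => xs kk ls / xstar ls) atTop (𝓝 (0:ℝ)) := by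
      have := (hcoord ls).div_const (xstar ls)
      rwa [hx0LI.1 ls hlsI, zero_div] at this
    apply tendsto_nhdsWithin_of_tendsto_nhds_of_eventually_within _ h0
    exact Eventually.of_forall fun kk => div_pos ((hxsS kk).1 ls) (hxs ls)
  have hlogbot : Tendsto (fun kk => Real.log (xs kk ls / xstar ls)) atTop atBot :=
    Real.tendsto_log_nhdsGT_zero.comp hlimls
  have hterm : Tendsto (fun kk => W ls * Real.log (xs kk ls / xstar ls)) atTop atBot :=
    hlogbot.const_mul_atBot hls
  have hev1 : ∀ᶠ kk in atTop, ∀ l ∈ (I : Set (Fin m)), xs kk l ≤ xstar l := by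
    rw [Set.Finite.eventually_all (I : Set (Fin m)).toFinite]
    intro l hl
    have hlt : x0 l < xstar l := by
      rw [hx0LI.1 l hl]; exact hxs l
    exact ((hcoord l).eventually_lt_const hlt).mono fun kk hkk => hkk.le
  have hev2 : ∀ᶠ kk in atTop,
      ∑ l ∈ Iᶜ, W l * Real.log (xs kk l / xstar l) ≤ b0 + 1 :=
    hB.eventually_le_const (by linarith)
  have hev3 : ∀ᶠ kk in atTop, W ls * Real.log (xs kk ls / xstar ls) ≤ -(b0 + 2) :=
    hterm.eventually_le_atBot _
  obtain ⟨kk, h1, h2, h3⟩ := (hev1.and (hev2.and hev3)).exists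
  have hA : ∑ l ∈ I, W l * Real.log (xs kk l / xstar l)
      ≤ W ls * Real.log (xs kk ls / xstar ls) := by
    rw [← Finset.add_sum_erase I _ hlsI]
    have hrest : ∑ l ∈ I.erase ls, W l * Real.log (xs kk l / xstar l) ≤ 0 := by
      apply Finset.sum_nonpos
      intro l hl
      have hlI := Finset.mem_of_mem_erase hl
      apply mul_nonpos_of_nonneg_of_nonpos
      · have := hw1 l hlI
        simpa [hW, hd] using this
      · apply Real.log_nonpos
        · exact (div_pos ((hxsS kk).1 l) (hxs l)).le
        · exact (div_le_one (hxs l)).mpr (h1 l hlI)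
    linarith
  have := hG kk
  linarith

end Main

/-- for a cyclic complex balanced system, if `cl(S_μ) ∩ L_I ≠ ∅` then there
is `α` negative on `I`, zero off `I`, with `⟨α, f(x)⟩ ≤ 0` on `cl(S_μ)`. -/
theorem stmt6 {m n : ℕ} (hn : 2 ≤ n) (z : Fin n → Fin m → ℕ) (hz : Function.Injective z)
    (k : Fin n → Fin n → ℝ) (hknn : ∀ i j, 0 ≤ k i j) (hkd : ∀ i, k i i = 0)
    (hcyc : isCyclic k)
    (xstar : Fin m → ℝ) (hxs : ∀ l, 0 < xstar l)
    (hcb : complexBalanced z k xstar)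
    (μ : Equiv.Perm (Fin n)) (I : Finset (Fin m)) (hI : I.Nonempty)
    (h : (closure (stratum z xstar μ) ∩ LI I).Nonempty) :
    ∃ α : Fin m → ℝ, (∀ i ∈ I, α i < 0) ∧ (∀ i ∉ I, α i = 0) ∧
      ∀ x ∈ closure (stratum z xstar μ), ∑ l, α l * maf z k x l ≤ 0 := by
  rcases dual_alternative
      (fun (i : Fin (n - 1)) (l : Fin m) => ((z (μ (emb i)) l : ℝ) - (z (μ (embS i)) l : ℝ)))
      I with ⟨α, hαI, hαoff, hαd⟩ | ⟨lam, h1, h2, h3⟩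
  · exact ⟨α, hαI, hαoff, main_ineq hn z k hcyc xstar hxs hcb μ α hαd⟩
  · exact absurd (no_second hn z xstar hxs μ I h lam h1 h2 h3) not_false
end
end
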